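/- arXiv:1402.4037 — 4 statements merged into one kernel-verified Lean document; each statement's English description precedes it below -/
import Mathlib

section
/- Let G = (V,E) and Ĝ = (V,Ê) be finite connected simple graphs on the same vertex set with Ê ⊆ E, let U ⊆ V be self-contained in Ĝ, and let S ⊆ U be a clique of Ĝ. Suppose δ(u,v) = δ̂(u,v) for every pair (u,v) with u ∈ N(S) ∩ U and v ∈ U, where N(S) = {w ∈ V : δ(S,w) ≤ 1} is taken with respect to G. Then for all vertices x, y lying in different connected components of the subgraph of Ĝ induced on U ∖ S, the pair {x,y} is not an edge of G. -/
open SimpleGraph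

/-- Distance from a set of vertices: `δ(S, v) = min_{s ∈ S} δ(s, v)`. -/
noncomputable def setDist {V : Type*} (G : SimpleGraph V) (S : Set V) (v : V) : ℕ :=
  sInf {d | ∃ s ∈ S, G.dist s v = d}

/-- `N(S) = {w : δ(S, w) ≤ 1}`. -/
noncomputable def nbrSet {V : Type*} (G : SimpleGraph V) (S : Set V) : Set V :=
  {w | setDist G S w ≤ 1}

/-- `U` is self-contained in `G`: every shortest path in `G` between vertices of `U`
stays inside `U`. -/
def SelfContained {V : Type*} (G : SimpleGraph V) (U : Set V) : Prop :=
  ∀ x ∈ U, ∀ y ∈ U, ∀ z : V, G.dist x z + G.dist z y = G.dist x y → z ∈ U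

/-- On a shortest walk, distances split additively at every support vertex. -/
lemma shortest_split {V : Type*} [DecidableEq V] {H : SimpleGraph V} {x y z : V} (p : H.Walk x y)
    (hp : p.length = H.dist x y) (hz : z ∈ p.support) :
    H.dist x z = (p.takeUntil z hz).length ∧ H.dist z y = (p.dropUntil z hz).length ∧
      H.dist x z + H.dist z y = H.dist x y := by
  have hlen : (p.takeUntil z hz).length + (p.dropUntil z hz).length = p.length := by
    have := congr_arg SimpleGraph.Walk.length (p.take_spec hz)
    rwa [SimpleGraph.Walk.length_append] at this
  have h1 : H.dist x z ≤ (p.takeUntil z hz).length := SimpleGraph.dist_le _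
  have h2 : H.dist z y ≤ (p.dropUntil z hz).length := SimpleGraph.dist_le _
  have h3 : H.dist x y ≤ H.dist x z + H.dist z y := by
    obtain ⟨q, hq⟩ := (SimpleGraph.Reachable.exists_walk_length_eq_dist
      ((p.takeUntil z hz).reachable))
    obtain ⟨r, hr⟩ := (SimpleGraph.Reachable.exists_walk_length_eq_dist
      ((p.dropUntil z hz).reachable))
    calc H.dist x y ≤ (q.append r).length := SimpleGraph.dist_le _
      _ = H.dist x z + H.dist z y := by
        rw [SimpleGraph.Walk.length_append, hq, hr]
  omega

lemma walk_reachable_induce {V : Type*} {H : SimpleGraph V} {T : Set V} {a b : V}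
    (q : H.Walk a b) (hsup : ∀ z ∈ q.support, z ∈ T) :
    (H.induce T).Reachable ⟨a, hsup a q.start_mem_support⟩ ⟨b, hsup b q.end_mem_support⟩ := by
  induction q with
  | nil => rfl
  | @cons a b c hab q ih =>
    have hb : b ∈ T := hsup b (by simp)
    have hadj : (H.induce T).Adj ⟨a, hsup a (by simp)⟩ ⟨b, hb⟩ := hab
    exact hadj.reachable.trans (ih (fun z hz => hsup z (by simp [hz])))

theorem stmt_7 {V : Type*} [Fintype V]
    (G Ghat : SimpleGraph V) (hG : G.Connected) (hGhat : Ghat.Connected)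
    (hsub : Ghat ≤ G) (U : Set V) (hU : SelfContained Ghat U)
    (S : Set V) (hSU : S ⊆ U) (hclique : Ghat.IsClique S)
    (hdist : ∀ u v : V, u ∈ nbrSet G S ∩ U → v ∈ U → G.dist u v = Ghat.dist u v)
    (x y : ↑(U \ S))
    (hxy : (Ghat.induce (U \ S)).connectedComponentMk x ≠
           (Ghat.induce (U \ S)).connectedComponentMk y) :
    ¬ G.Adj ↑x ↑y := by
  classical
  intro hadj
  obtain ⟨x, hxU, hxS⟩ := x
  obtain ⟨y, hyU, hyS⟩ := y
  simp only at hadj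
  have hne : x ≠ y := hadj.ne
  have hdxy1 : G.dist x y = 1 := dist_eq_one_iff_adj.mpr hadj
  -- a shortest Ghat-walk from x to y
  obtain ⟨p, hp⟩ := (hGhat x y).exists_walk_length_eq_dist
  -- every support vertex is in U
  have hsupU : ∀ z ∈ p.support, z ∈ U := by
    intro z hz
    obtain ⟨_, _, h3⟩ := shortest_split p hp hz
    exact hU x hxU y hyU z h3
  -- Case: the walk meets S
  by_cases hSsup : ∃ s ∈ p.support, s ∈ S
  · obtain ⟨s, hsmem, hsS⟩ := hSsup
    have hsx : x ≠ s := fun h => hxS (h ▸ hsS)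
    have hsy : s ≠ y := fun h => hyS (h ▸ hsS)
    obtain ⟨hq, hr, hqr⟩ := shortest_split p hp hsmem
    set q := p.takeUntil s hsmem with hqdef
    set r := p.dropUntil s hsmem with hrdef
    -- w : predecessor of s (second vertex of q.reverse)
    have hqnil : ¬ q.reverse.Nil := Walk.not_nil_of_ne (Ne.symm hsx)
    set w := q.reverse.getVert 1 with hwdef
    have hadjsw : Ghat.Adj s w := q.reverse.adj_snd hqnil
    have hwq : w ∈ q.support := by
      have h0 : 0 < q.reverse.length := Walk.not_nil_iff_lt_length.mp hqnil
      have : w ∈ q.reverse.support :=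
        Walk.mem_support_iff_exists_getVert.mpr ⟨1, rfl, by omega⟩
      rwa [Walk.support_reverse, List.mem_reverse] at this
    have hwp : w ∈ p.support := p.support_takeUntil_subset hsmem hwq
    have hwU : w ∈ U := hsupU w hwp
    -- w' : successor of s (second vertex of r)
    have hrnil : ¬ r.Nil := Walk.not_nil_of_ne hsy
    set w' := r.getVert 1 with hw'def
    have hadjsw' : Ghat.Adj s w' := r.adj_snd hrnil
    have hw'r : w' ∈ r.support := by
      refine Walk.mem_support_iff_exists_getVert.mpr ⟨1, rfl, ?_⟩
      have := Walk.not_nil_iff_lt_length.mp hrnil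
      omega
    have hw'p : w' ∈ p.support := p.support_dropUntil_subset hsmem hw'r
    have hw'U : w' ∈ U := hsupU w' hw'p
    -- w, w' are in N(S)
    have hwN : w ∈ nbrSet G S := by
      have : setDist G S w ≤ G.dist s w := Nat.sInf_le ⟨s, hsS, rfl⟩
      have h1 : G.dist s w ≤ 1 := by
        rw [dist_eq_one_iff_adj.mpr (hsub hadjsw)]
      exact le_trans this h1
    have hw'N : w' ∈ nbrSet G S := by
      have : setDist G S w' ≤ G.dist s w' := Nat.sInf_le ⟨s, hsS, rfl⟩
      have h1 : G.dist s w' ≤ 1 := by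
        rw [dist_eq_one_iff_adj.mpr (hsub hadjsw')]
      exact le_trans this h1
    -- shortest-walk distance equations
    have hqlen : q.length = Ghat.dist x s := hq.symm
    have hsw1 : Ghat.dist w s = 1 := dist_eq_one_iff_adj.mpr hadjsw.symm
    obtain ⟨_, _, hxw⟩ := shortest_split q hqlen hwq
    -- hxw : Ghat.dist x w + Ghat.dist w s = Ghat.dist x s
    have hrlen : r.length = Ghat.dist s y := hr.symm
    obtain ⟨hsw', _, hw'y⟩ := shortest_split r hrlen hw'r
    have hsw'1 : Ghat.dist s w' = 1 := dist_eq_one_iff_adj.mpr hadjsw'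
    obtain ⟨_, _, hwsplit⟩ := shortest_split p hp hwp
    obtain ⟨_, _, hw'split⟩ := shortest_split p hp hw'p
    -- Ghat distances
    have e1 : Ghat.dist x w + 1 = Ghat.dist x s := by omega
    have e2 : Ghat.dist w y = Ghat.dist s y + 1 := by omega
    have e3 : Ghat.dist w' y + 1 = Ghat.dist s y := by omega
    have e4 : Ghat.dist x w' = Ghat.dist x s + 1 := by omega
    -- now use hdist
    have d1 : G.dist w y = Ghat.dist w y := hdist w y ⟨hwN, hwU⟩ hyU
    have d2 : G.dist w x = Ghat.dist w x := hdist w x ⟨hwN, hwU⟩ hxU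
    have d3 : G.dist w' x = Ghat.dist w' x := hdist w' x ⟨hw'N, hw'U⟩ hxU
    have d4 : G.dist w' y = Ghat.dist w' y := hdist w' y ⟨hw'N, hw'U⟩ hyU
    have t1 : G.dist w y ≤ G.dist w x + G.dist x y := hG.dist_triangle
    have t2 : G.dist w' x ≤ G.dist w' y + G.dist y x := hG.dist_triangle
    have c1 : Ghat.dist w x = Ghat.dist x w := SimpleGraph.dist_comm
    have c2 : Ghat.dist w' x = Ghat.dist x w' := SimpleGraph.dist_comm
    have hdyx : G.dist y x = 1 := by rwa [SimpleGraph.dist_comm]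
    have hspos : 1 ≤ Ghat.dist s y := by
      have := hGhat.pos_dist_of_ne hsy
      omega
    omega
  -- Case: the walk avoids S; then x and y are connected in the induced graph
  · push_neg at hSsup
    apply hxy
    apply ConnectedComponent.sound
    have hsub' : ∀ z ∈ p.support, z ∈ U \ S := fun z hz => ⟨hsupU z hz, hSsup z hz⟩
    exact walk_reachable_induce p hsub'
end

section
/- Let G = (V,E) be a finite connected simple graph, let U ⊆ V be self-contained in G, and let S ⊆ U. Define W = (N(S) ∩ U) ∖ S and for a ∈ W the cluster B(a) = {x ∈ U ∖ S : δ(a,x) ≤ δ(S,x)}. Then for every a ∈ W and every x ∈ B(a), the vertices a and x belong to the same connected component of the subgraph of G induced on U ∖ S. -/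
open SimpleGraph

/-- `W = (N(S) ∩ U) \ S`. -/
noncomputable def Wset {V : Type*} (G : SimpleGraph V) (U S : Set V) : Set V :=
  (nbrSet G S ∩ U) \ S

/-- The cluster `B(a) = {x ∈ U \ S : δ(a,x) ≤ δ(S,x)}`. -/
noncomputable def cluster {V : Type*} (G : SimpleGraph V) (U S : Set V) (a : V) : Set V :=
  {x ∈ U \ S | G.dist a x ≤ setDist G S x}

lemma walk_reach {V : Type*} (G : SimpleGraph V) (T : Set V) :
    ∀ {a x : V} (p : G.Walk a x), (∀ z ∈ p.support, z ∈ T) →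
    ∀ (haT : a ∈ T) (hxT : x ∈ T),
    (G.induce T).Reachable ⟨a, haT⟩ ⟨x, hxT⟩ := by
  intro a x p
  induction p with
  | nil => intro _ _ _; rfl
  | @cons u v w h q ih =>
    intro hsup haT hxT
    have hb : v ∈ T := hsup v (by simp [SimpleGraph.Walk.support_cons])
    exact (Adj.reachable (show (G.induce T).Adj ⟨u, haT⟩ ⟨v, hb⟩ from h)).trans
      (ih (fun z hz => hsup z (by simp [SimpleGraph.Walk.support_cons, hz])) hb hxT)

theorem stmt_12' {V : Type*} [Fintype V] (G : SimpleGraph V) (hG : G.Connected)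
    (U : Set V) (hU : SelfContained G U) (S : Set V) (hSU : S ⊆ U)
    (a : V) (ha : a ∈ Wset G U S) (x : V) (hx : x ∈ cluster G U S a) :
    (G.induce (U \ S)).Reachable ⟨a, ⟨ha.1.2, ha.2⟩⟩ ⟨x, hx.1⟩ := by
  obtain ⟨⟨hxU, hxS⟩, hdx⟩ := hx
  obtain ⟨⟨_, haU⟩, haS⟩ := ha
  obtain ⟨p, hp⟩ := (hG a x).exists_walk_length_eq_dist
  classical
  refine walk_reach G (U \ S) p ?_ ⟨haU, haS⟩ ⟨hxU, hxS⟩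
  intro z hz
  -- split the walk at z
  have hsplit : G.dist a z + G.dist z x = G.dist a x := by
    have h1 : G.dist a z ≤ (p.takeUntil z hz).length := SimpleGraph.dist_le _
    have h2 : G.dist z x ≤ (p.dropUntil z hz).length := SimpleGraph.dist_le _
    have h3 : (p.takeUntil z hz).length + (p.dropUntil z hz).length = p.length := by
      rw [← SimpleGraph.Walk.length_append, p.take_spec hz]
    have h4 := hG.dist_triangle (u := a) (v := z) (w := x)
    omega
  have hzU : z ∈ U := hU a haU x hxU z hsplit
  refine ⟨hzU, fun hzS => ?_⟩
  have h5 : setDist G S x ≤ G.dist z x := Nat.sInf_le ⟨z, hzS, rfl⟩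
  have h6 : 0 < G.dist a z := by
    rcases Nat.eq_zero_or_pos (G.dist a z) with h | h
    · exact absurd (((hG a z).dist_eq_zero_iff).mp h ▸ hzS) haS
    · exact h
  omega

theorem stmt_12 {V : Type*} [Fintype V] (G : SimpleGraph V) (hG : G.Connected)
    (U : Set V) (hU : SelfContained G U) (S : Set V) (hSU : S ⊆ U)
    (a : V) (ha : a ∈ Wset G U S) (x : V) (hx : x ∈ cluster G U S a) :
    (G.induce (U \ S)).Reachable ⟨a, ⟨ha.1.2, ha.2⟩⟩ ⟨x, hx.1⟩ :=
  stmt_12' G hG U hU S hSU a ha x hx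
end

section
/- Let G = (V,E) be a finite connected simple graph, let U ⊆ V be self-contained in G, and let S ⊆ U be nonempty. Define W = (N(S) ∩ U) ∖ S and for a ∈ W the cluster B(a) = {x ∈ U ∖ S : δ(a,x) ≤ δ(S,x)}. Then every vertex x ∈ U ∖ S belongs to B(a) for some a ∈ W. -/
open SimpleGraph

theorem stmt_13 {V : Type*} [Fintype V] (G : SimpleGraph V) (hG : G.Connected)
    (U : Set V) (hU : SelfContained G U) (S : Set V) (hSU : S ⊆ U) (hS : S.Nonempty) :
    ∀ x ∈ U \ S, ∃ a ∈ Wset G U S, x ∈ cluster G U S a := by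

  intro x hx
  obtain ⟨hxU, hxS⟩ := hx
  -- the distance set is nonempty
  have hne : {d | ∃ s ∈ S, G.dist s x = d}.Nonempty := by
    obtain ⟨s, hs⟩ := hS
    exact ⟨G.dist s x, s, hs, rfl⟩
  obtain ⟨s, hsS, hsd⟩ := Nat.sInf_mem hne
  have hsd' : G.dist s x = setDist G S x := hsd
  set d := setDist G S x with hd
  have hdpos : 0 < d := by
    rcases Nat.eq_zero_or_pos d with h0 | h
    · exfalso
      have : s = x := by
        have : G.dist s x = 0 := by omega
        exact (hG.dist_eq_zero_iff).mp this
      exact hxS (this ▸ hsS)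
    · exact h
  obtain ⟨p, hp⟩ := hG.exists_walk_length_eq_dist s x
  have hplen : p.length = d := hp.trans hsd ▸ rfl
  cases p with
  | nil => simp [hd, ← hsd] at hplen; omega
  | cons h q =>
    rename_i a
    have hql : q.length = d - 1 := by
      simp only [SimpleGraph.Walk.length_cons] at hplen; omega
    have hax : G.dist a x ≤ d - 1 := hql ▸ G.dist_le q
    have hsa : G.dist s a = 1 := by
      have h1 : G.dist s a ≤ 1 := by
        have : (SimpleGraph.Walk.cons h SimpleGraph.Walk.nil : G.Walk s a).length = 1 := by simp
        exact this ▸ G.dist_le _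
      have hne' : s ≠ a := G.ne_of_adj h
      have h0 : G.dist s a ≠ 0 := fun hc => hne' (hG.dist_eq_zero_iff.mp hc)
      omega
    have htri : G.dist s x ≤ G.dist s a + G.dist a x := hG.dist_triangle
    have haxd : G.dist a x = d - 1 := by omega
    have hsum : G.dist s a + G.dist a x = G.dist s x := by omega
    have haU : a ∈ U := hU s (hSU hsS) x hxU a hsum
    have haS : a ∉ S := by
      intro haS
      have : d ≤ G.dist a x := Nat.sInf_le ⟨a, haS, rfl⟩
      omega
    have haN : setDist G S a ≤ 1 := by
      have : setDist G S a ≤ G.dist s a := Nat.sInf_le ⟨s, hsS, rfl⟩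
      omega
    refine ⟨a, ⟨⟨haN, haU⟩, haS⟩, ⟨⟨hxU, hxS⟩, ?_⟩⟩
    omega
end

section
/- Let G = (V,E) be a finite connected simple graph, let U ⊆ V be self-contained in G, and let S ⊆ U be nonempty. Define W = (N(S) ∩ U) ∖ S, for a ∈ W the cluster B(a) = {x ∈ U ∖ S : δ(a,x) ≤ δ(S,x)}, and the relation a ~ b on W by B(a) ∩ B(b) ≠ ∅. Then for all x, y ∈ U ∖ S: x and y lie in the same connected component of the subgraph of G induced on U ∖ S if and only if there exist a, b ∈ W with x ∈ B(a), y ∈ B(b), and a related to b under the reflexive-transitive closure of ~. (Hence merging overlapping clusters yields exactly the partition of U ∖ S into connected components.) -/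
open SimpleGraph

section Aux
variable {V : Type*} {G : SimpleGraph V} {U S : Set V} {v : V}

lemma setDist_exists (hS : S.Nonempty) (v : V) : ∃ s ∈ S, G.dist s v = setDist G S v := by
  obtain ⟨s, hs⟩ := hS
  have hne : {d | ∃ s ∈ S, G.dist s v = d}.Nonempty := ⟨G.dist s v, s, hs, rfl⟩
  exact Nat.sInf_mem hne

lemma setDist_le {s : V} (hs : s ∈ S) (v : V) : setDist G S v ≤ G.dist s v :=
  Nat.sInf_le ⟨s, hs, rfl⟩

lemma setDist_pos (hG : G.Connected) (hS : S.Nonempty) (hv : v ∉ S) : 1 ≤ setDist G S v := by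
  obtain ⟨s, hs, hd⟩ := setDist_exists (G := G) hS v
  by_contra h
  have h0 : G.dist s v = 0 := by omega
  exact hv ((hG.dist_eq_zero_iff.mp h0) ▸ hs)

lemma shortest_support [DecidableEq V] (hG : G.Connected) {u v z : V} (p : G.Walk u v)
    (hp : p.length = G.dist u v) (hz : z ∈ p.support) :
    G.dist u z + G.dist z v = G.dist u v := by
  have hsplit := congrArg SimpleGraph.Walk.length (p.take_spec hz)
  rw [SimpleGraph.Walk.length_append] at hsplit
  have h1 : G.dist u z ≤ (p.takeUntil z hz).length := dist_le _
  have h2 : G.dist z v ≤ (p.dropUntil z hz).length := dist_le _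
  have h3 : G.dist u v ≤ G.dist u z + G.dist z v := hG.dist_triangle
  omega

lemma reachable_induce {s : Set V} :
    ∀ {u v : V} (p : G.Walk u v), (∀ z ∈ p.support, z ∈ s) →
      ∀ (hu : u ∈ s) (hv : v ∈ s), (G.induce s).Reachable ⟨u, hu⟩ ⟨v, hv⟩ := by
  intro u v p
  induction p with
  | nil => intro _ hu hv; rfl
  | cons h q ih =>
    intro hsupp hu hv
    rename_i u b v
    have hb : b ∈ s := hsupp b (by simp)
    have hadj : (G.induce s).Adj ⟨_, hu⟩ ⟨b, hb⟩ := by simpa using h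
    exact hadj.reachable.trans (ih (fun z hz => hsupp z (by simp [hz])) hb hv)

lemma cluster_reachable [DecidableEq V] (hG : G.Connected) (hU : SelfContained G U)
    {a x : V} (ha : a ∈ U \ S) (hx : x ∈ cluster G U S a) :
    (G.induce (U \ S)).Reachable ⟨a, ha⟩ ⟨x, hx.1⟩ := by
  obtain ⟨hxUS, hd⟩ := hx
  obtain ⟨p, hp⟩ := hG.exists_walk_length_eq_dist a x
  refine reachable_induce p ?_ ha hxUS
  intro z hz
  have hsplit := shortest_support hG p hp hz
  have hzU : z ∈ U := hU a ha.1 x hxUS.1 z hsplit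
  refine ⟨hzU, fun hzS => ?_⟩
  have h1 : setDist G S x ≤ G.dist z x := setDist_le hzS x
  have h2 : G.dist a z = 0 := by omega
  have h3 : a = z := hG.dist_eq_zero_iff.mp h2
  exact ha.2 (h3 ▸ hzS)

lemma exists_cluster (hG : G.Connected) (hU : SelfContained G U) (hSU : S ⊆ U)
    (hS : S.Nonempty) {x : V} (hx : x ∈ U \ S) :
    ∃ a ∈ Wset G U S, x ∈ cluster G U S a ∧ G.dist a x + 1 = setDist G S x := by
  obtain ⟨s, hsS, hsd⟩ := setDist_exists (G := G) hS x
  have hpos : 1 ≤ setDist G S x := setDist_pos hG hS hx.2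
  obtain ⟨p, hp⟩ := hG.exists_walk_length_eq_dist s x
  cases p with
  | nil => simp at hp; simp only [SimpleGraph.dist_self] at hsd; omega
  | cons h q =>
    rename_i b
    have hqlen : G.dist b x ≤ q.length := dist_le q
    have hlen : q.length + 1 = G.dist s x := by simpa using hp
    have hsb : G.dist s b ≤ 1 := by
      have := dist_le (SimpleGraph.Walk.cons h SimpleGraph.Walk.nil)
      simpa using this
    have htri : G.dist s x ≤ G.dist s b + G.dist b x := hG.dist_triangle
    have hsb1 : 0 < G.dist s b := hG.pos_dist_of_ne h.ne
    have hsum : G.dist s b + G.dist b x = G.dist s x := by omega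
    have hbU : b ∈ U := hU s (hSU hsS) x hx.1 b hsum
    have hbS : b ∉ S := fun hbS => by have := setDist_le (G := G) hbS x; omega
    have hbN : b ∈ nbrSet G S := by
      have := setDist_le (G := G) hsS b
      show setDist G S b ≤ 1
      omega
    exact ⟨b, ⟨⟨hbN, hbU⟩, hbS⟩, ⟨hx, by omega⟩, by omega⟩

lemma adj_common (hG : G.Connected) (hU : SelfContained G U) (hSU : S ⊆ U)
    (hS : S.Nonempty) {x y : V} (hx : x ∈ U \ S) (hy : y ∈ U \ S) (hxy : G.Adj x y)
    (hle : setDist G S x ≤ setDist G S y) :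
    ∃ a ∈ Wset G U S, x ∈ cluster G U S a ∧ y ∈ cluster G U S a := by
  obtain ⟨a, haW, hxa, hda⟩ := exists_cluster hG hU hSU hS hx
  refine ⟨a, haW, hxa, hy, ?_⟩
  have h1 : G.dist x y ≤ 1 := by
    have := dist_le (SimpleGraph.Walk.cons hxy SimpleGraph.Walk.nil)
    simpa using this
  have h2 : G.dist a y ≤ G.dist a x + G.dist x y := hG.dist_triangle
  omega

end Aux

theorem stmt_19 {V : Type*} [Fintype V] (G : SimpleGraph V) (hG : G.Connected)
    (U : Set V) (hU : SelfContained G U) (S : Set V) (hSU : S ⊆ U) (hS : S.Nonempty)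
    (x y : V) (hx : x ∈ U \ S) (hy : y ∈ U \ S) :
    (G.induce (U \ S)).Reachable ⟨x, hx⟩ ⟨y, hy⟩ ↔
      ∃ a ∈ Wset G U S, ∃ b ∈ Wset G U S,
        x ∈ cluster G U S a ∧ y ∈ cluster G U S b ∧
        Relation.ReflTransGen
          (fun p q => p ∈ Wset G U S ∧ q ∈ Wset G U S ∧
            (cluster G U S p ∩ cluster G U S q).Nonempty) a b := by
  classical
  set R := fun p q => p ∈ Wset G U S ∧ q ∈ Wset G U S ∧
      (cluster G U S p ∩ cluster G U S q).Nonempty with hR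
  have hWUS : ∀ c ∈ Wset G U S, c ∈ U \ S := fun c hc => ⟨hc.1.2, hc.2⟩
  constructor
  · intro h
    rw [reachable_iff_reflTransGen] at h
    have key : ∀ u : (U \ S : Set V), Relation.ReflTransGen (G.induce (U \ S)).Adj u ⟨y, hy⟩ →
        ∃ a ∈ Wset G U S, ∃ b ∈ Wset G U S,
          ↑u ∈ cluster G U S a ∧ y ∈ cluster G U S b ∧ Relation.ReflTransGen R a b := by
      intro u hu
      induction hu using Relation.ReflTransGen.head_induction_on with
      | refl =>
        obtain ⟨a, haW, hya, _⟩ := exists_cluster hG hU hSU hS hy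
        exact ⟨a, haW, a, haW, hya, hya, Relation.ReflTransGen.refl⟩
      | head hadj htail ih =>
        rename_i p q
        obtain ⟨a, haW, b, hbW, hqa, hyb, hab⟩ := ih
        have hGadj : G.Adj p.val q.val := by simpa using hadj
        have hcom : ∃ c ∈ Wset G U S, ↑p ∈ cluster G U S c ∧ ↑q ∈ cluster G U S c := by
          rcases le_total (setDist G S p.val) (setDist G S q.val) with hle | hle
          · exact adj_common hG hU hSU hS p.2 q.2 hGadj hle
          · obtain ⟨c, hcW, h1, h2⟩ := adj_common hG hU hSU hS q.2 p.2 hGadj.symm hle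
            exact ⟨c, hcW, h2, h1⟩
        obtain ⟨c, hcW, hpc, hqc⟩ := hcom
        refine ⟨c, hcW, b, hbW, hpc, hyb, ?_⟩
        exact Relation.ReflTransGen.head ⟨hcW, haW, q.val, hqc, hqa⟩ hab
    exact key ⟨x, hx⟩ h
  · rintro ⟨a, haW, b, hbW, hxa, hyb, hab⟩
    have chain : ∀ c d : V, Relation.ReflTransGen R c d →
        ∀ (hc : c ∈ U \ S) (hd : d ∈ U \ S),
          (G.induce (U \ S)).Reachable ⟨c, hc⟩ ⟨d, hd⟩ := by
      intro c d h
      induction h with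
      | refl => intro hc hd; exact Reachable.refl _
      | @tail p d' h h' ih =>
        intro hc hd
        obtain ⟨hpW, hdW, w, hwp, hwq⟩ := h'
        have hp : p ∈ U \ S := hWUS p hpW
        have r1 := cluster_reachable hG hU hp hwp
        have r2 := cluster_reachable hG hU (hWUS _ hdW) hwq
        exact (ih hc hp).trans (r1.trans r2.symm)
    have rx := cluster_reachable hG hU (hWUS a haW) hxa
    have ry := cluster_reachable hG hU (hWUS b hbW) hyb
    exact (rx.symm.trans (chain a b hab (hWUS a haW) (hWUS b hbW))).trans ry
end
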